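/- Let T_s > 0, Δ > 0, e_∞ > 0, a_l > 0, b_l > 0 and e₀ ∈ ℝ satisfy e₀ - Δ + e_∞ > 0. Set c_{2l} = 2·exp(b_l)/(exp(2b_l) - 1), and define K_{2l} : [0,∞) → ℝ by K_{2l}(t) = ((e₀ - Δ + e_∞)/c_{2l})·csch(a_l·t/(T_s - t) + b_l) - e_∞ for t ∈ [0, T_s), and K_{2l}(t) = -e_∞ for t ≥ T_s. Then: (i) c_{2l} = csch(b_l), and consequently K_{2l}(0) = e₀ - Δ; (ii) K_{2l} is strictly decreasing on [0, T_s]; (iii) K_{2l}(t) → -e_∞ as t → T_s from the left, so K_{2l} is continuous on [0,∞) (properties of the novel performance function (25)). -/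

import Mathlib

open Real Filter

/-- Properties of the novel performance function (25), built from the
hyperbolic cosecant `csch x = 1 / sinh x`. -/
theorem performance_function_csch_properties
    (Ts Δ einf al bl e₀ : ℝ)
    (hTs : 0 < Ts) (hΔ : 0 < Δ) (heinf : 0 < einf)
    (hal : 0 < al) (hbl : 0 < bl)
    (he₀ : 0 < e₀ - Δ + einf)
    (c2l : ℝ)
    (hc2l : c2l = 2 * Real.exp bl / (Real.exp (2 * bl) - 1))
    (K : ℝ → ℝ)
    (hK₁ : ∀ t, 0 ≤ t → t < Ts →
      K t = ((e₀ - Δ + einf) / c2l) *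
              (1 / Real.sinh (al * t / (Ts - t) + bl)) - einf)
    (hK₂ : ∀ t, Ts ≤ t → K t = -einf) :
    c2l = 1 / Real.sinh bl ∧
    K 0 = e₀ - Δ ∧
    StrictAntiOn K (Set.Icc 0 Ts) ∧
    Tendsto K (nhdsWithin Ts (Set.Iio Ts)) (nhds (-einf)) ∧
    ContinuousOn K (Set.Ici 0) := by
  have hsinh : 0 < Real.sinh bl := Real.sinh_pos_iff.mpr hbl
  have hxpos : 0 < Real.exp bl := Real.exp_pos bl
  have hx1 : 1 < Real.exp bl := by nlinarith [Real.add_one_le_exp bl]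
  have hexp2 : Real.exp (2 * bl) = Real.exp bl * Real.exp bl := by
    rw [two_mul, Real.exp_add]
  have hc : c2l = 1 / Real.sinh bl := by
    rw [hc2l, Real.sinh_eq, Real.exp_neg, hexp2]
    have h1 : Real.exp bl * Real.exp bl - 1 ≠ 0 := by nlinarith
    have h2 : Real.exp bl - (Real.exp bl)⁻¹ ≠ 0 := by
      have : (Real.exp bl)⁻¹ < 1 := by
        rw [inv_lt_one_iff₀]; right; exact hx1
      nlinarith
    field_simp
  have hCdef : (e₀ - Δ + einf) / c2l = (e₀ - Δ + einf) * Real.sinh bl := by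
    rw [hc]; field_simp
  set C : ℝ := (e₀ - Δ + einf) / c2l with hCset
  have hC : 0 < C := by rw [hCdef]; positivity
  -- argument function
  have hgpos : ∀ u : ℝ, 0 ≤ u → u < Ts → 0 < al * u / (Ts - u) + bl := by
    intro u hu huT
    have h1 : 0 < Ts - u := by linarith
    have : 0 ≤ al * u / (Ts - u) := by positivity
    linarith
  have hKform : ∀ u : ℝ, 0 ≤ u → u < Ts →
      K u = C / Real.sinh (al * u / (Ts - u) + bl) - einf := by
    intro u hu huT
    rw [hK₁ u hu huT]
    ring
  have hKgt : ∀ u : ℝ, 0 ≤ u → u < Ts → -einf < K u := by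
    intro u hu huT
    rw [hKform u hu huT]
    have hs : 0 < Real.sinh (al * u / (Ts - u) + bl) :=
      Real.sinh_pos_iff.mpr (hgpos u hu huT)
    have : 0 < C / Real.sinh (al * u / (Ts - u) + bl) := by positivity
    linarith
  -- strict anti on Icc
  have hanti : StrictAntiOn K (Set.Icc 0 Ts) := by
    intro s hs t ht hst
    rcases eq_or_lt_of_le ht.2 with hteq | htlt
    · rw [hK₂ t hteq.ge]
      exact hKgt s hs.1 (hteq ▸ hst)
    · have hsT : s < Ts := lt_trans hst htlt
      rw [hKform s hs.1 hsT, hKform t ht.1 htlt]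
      have h1 : 0 < Ts - s := by linarith
      have h2 : 0 < Ts - t := by linarith
      have harg : al * s / (Ts - s) + bl < al * t / (Ts - t) + bl := by
        have : al * s / (Ts - s) < al * t / (Ts - t) := by
          rw [div_lt_div_iff₀ h1 h2]
          nlinarith [mul_pos hal hTs, hs.1]
        linarith
      have hps : 0 < Real.sinh (al * s / (Ts - s) + bl) :=
        Real.sinh_pos_iff.mpr (hgpos s hs.1 hsT)
      have hsinhlt : Real.sinh (al * s / (Ts - s) + bl) <
          Real.sinh (al * t / (Ts - t) + bl) := Real.sinh_lt_sinh.mpr harg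
      have : C / Real.sinh (al * t / (Ts - t) + bl) <
          C / Real.sinh (al * s / (Ts - s) + bl) :=
        div_lt_div_of_pos_left hC hps hsinhlt
      linarith
  -- the limit
  have hlim : Tendsto K (nhdsWithin Ts (Set.Iio Ts)) (nhds (-einf)) := by
    have hsub : Tendsto (fun t : ℝ => Ts - t) (nhdsWithin Ts (Set.Iio Ts))
        (nhdsWithin 0 (Set.Ioi 0)) := by
      rw [tendsto_nhdsWithin_iff]
      constructor
      · have : Tendsto (fun t : ℝ => Ts - t) (nhds Ts) (nhds (Ts - Ts)) :=
          (continuous_const.sub continuous_id).tendsto Ts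
        simpa using this.mono_left nhdsWithin_le_nhds
      · filter_upwards [self_mem_nhdsWithin] with t ht
        exact sub_pos.mpr (Set.mem_Iio.mp ht)
    have hinv : Tendsto (fun t : ℝ => (Ts - t)⁻¹) (nhdsWithin Ts (Set.Iio Ts))
        atTop := tendsto_inv_nhdsGT_zero.comp hsub
    have hmul : Tendsto (fun t : ℝ => al * t) (nhdsWithin Ts (Set.Iio Ts))
        (nhds (al * Ts)) :=
      ((continuous_const.mul continuous_id).tendsto Ts).mono_left nhdsWithin_le_nhds
    have hgtop : Tendsto (fun t : ℝ => al * t / (Ts - t) + bl)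
        (nhdsWithin Ts (Set.Iio Ts)) atTop := by
      apply tendsto_atTop_add_const_right
      have := hmul.pos_mul_atTop (by positivity : (0:ℝ) < al * Ts) hinv
      simpa [div_eq_mul_inv] using this
    have hst2 : Tendsto Real.sinh atTop atTop := by
      have h1 : Tendsto (fun x : ℝ => (Real.exp x - 1) / 2) atTop atTop := by
        apply Tendsto.atTop_div_const (by norm_num : (0:ℝ) < 2)
        simpa [sub_eq_add_neg] using
          tendsto_atTop_add_const_right atTop (-1 : ℝ) Real.tendsto_exp_atTop
      apply tendsto_atTop_mono' atTop _ h1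
      filter_upwards [eventually_ge_atTop (0:ℝ)] with x hx
      rw [Real.sinh_eq]
      have hle : Real.exp (-x) ≤ 1 := Real.exp_le_one_iff.mpr (by linarith)
      linarith
    have hsinhtop : Tendsto (fun t : ℝ => Real.sinh (al * t / (Ts - t) + bl))
        (nhdsWithin Ts (Set.Iio Ts)) atTop := hst2.comp hgtop
    have hinvz : Tendsto (fun t : ℝ => C / Real.sinh (al * t / (Ts - t) + bl) - einf)
        (nhdsWithin Ts (Set.Iio Ts)) (nhds (-einf)) := by
      have h0 : Tendsto (fun t : ℝ => (Real.sinh (al * t / (Ts - t) + bl))⁻¹)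
          (nhdsWithin Ts (Set.Iio Ts)) (nhds 0) := hsinhtop.inv_tendsto_atTop
      have := (h0.const_mul C).sub_const einf
      simpa [div_eq_mul_inv] using this
    apply hinvz.congr'
    have hpos : ∀ᶠ t in nhdsWithin Ts (Set.Iio Ts), (0:ℝ) < t :=
      eventually_nhdsWithin_of_eventually_nhds (eventually_gt_nhds hTs)
    filter_upwards [hpos, self_mem_nhdsWithin] with t ht ht'
    exact (hKform t ht.le ht').symm
  -- continuity
  have hcont : ContinuousOn K (Set.Ici 0) := by
    intro x hx
    rcases lt_trichotomy x Ts with hxT | hxT | hxT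
    · -- x < Ts : K agrees with a continuous function near x
      have hf : ContinuousAt (fun t : ℝ =>
          C / Real.sinh (al * t / (Ts - t) + bl) - einf) x := by
        have h1 : (Ts - x) ≠ 0 := by
          have : (0:ℝ) < Ts - x := by linarith
          linarith
        have hgc : ContinuousAt (fun t : ℝ => al * t / (Ts - t) + bl) x := by
          apply ContinuousAt.add _ continuousAt_const
          exact (continuousAt_const.mul continuousAt_id).div
            (continuous_const.sub continuous_id).continuousAt h1
        have hsx : Real.sinh (al * x / (Ts - x) + bl) ≠ 0 :=
          ne_of_gt (Real.sinh_pos_iff.mpr (hgpos x hx hxT))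
        exact ((continuousAt_const.div
          (Real.continuous_sinh.continuousAt.comp hgc) hsx)).sub continuousAt_const
      apply (hf.continuousWithinAt).congr_of_eventuallyEq
      · have hmem : Set.Iio Ts ∈ nhdsWithin x (Set.Ici 0) :=
          mem_nhdsWithin_of_mem_nhds (Iio_mem_nhds hxT)
        filter_upwards [hmem, self_mem_nhdsWithin] with t ht ht'
        exact hKform t ht' ht
      · exact hKform x hx hxT
    · -- x = Ts
      subst hxT
      unfold ContinuousWithinAt
      rw [hK₂ x le_rfl]
      have hle : nhdsWithin x (Set.Ici 0) ≤
          nhdsWithin x (Set.Iio x) ⊔ nhdsWithin x (Set.Ici x) := by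
        rw [← nhdsWithin_union]
        apply nhdsWithin_mono
        intro t _
        exact lt_or_ge t x
      apply Tendsto.mono_left _ hle
      rw [tendsto_sup]
      refine ⟨hlim, ?_⟩
      apply Tendsto.congr' _ tendsto_const_nhds
      filter_upwards [self_mem_nhdsWithin] with t ht
      exact (hK₂ t ht).symm
    · -- x > Ts
      apply ContinuousWithinAt.congr_of_eventuallyEq
        continuousWithinAt_const
      · have hmem : Set.Ioi Ts ∈ nhdsWithin x (Set.Ici 0) :=
          mem_nhdsWithin_of_mem_nhds (Ioi_mem_nhds hxT)
        filter_upwards [hmem] with t ht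
        exact hK₂ t (le_of_lt ht)
      · exact hK₂ x (le_of_lt hxT)
  refine ⟨hc, ?_, hanti, hlim, hcont⟩
  rw [hKform 0 le_rfl hTs, hCdef]
  have : al * 0 / (Ts - 0) + bl = bl := by ring
  rw [this]
  field_simp
  ring
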